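/- Let P be a Borel probability measure on ℝⁿ, let V : ℝⁿ → ℝ be bounded and Borel measurable, and let ξ ≥ 0. Suppose there exists a Borel measurable map φ : ℝⁿ → ℝⁿ such that for all s, ‖φ(s) − s‖ ≤ ξ and V(φ(s)) = inf_{ŝ : ‖ŝ − s‖ ≤ ξ} V(ŝ). Then the infimum, over all Borel probability measures P̂ with W(P, P̂) ≤ ξ, of ∫ V dP̂ is at most ∫ [ inf_{ŝ : ‖ŝ − s‖ ≤ ξ} V(ŝ) ] dP(s). (One inequality of Proposition 1, the dual reformulation over the Wasserstein ball.) -/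

import Mathlib

open MeasureTheory

/-- The Wasserstein distance (with Euclidean cost) between two measures on ℝⁿ:
the infimum over all couplings of the expected Euclidean transport cost. -/
noncomputable def wassersteinDist {n : ℕ}
    (μ ν : Measure (EuclideanSpace ℝ (Fin n))) : ℝ :=
  sInf { c : ℝ | ∃ γ : Measure (EuclideanSpace ℝ (Fin n) × EuclideanSpace ℝ (Fin n)),
    IsProbabilityMeasure γ ∧ γ.map Prod.fst = μ ∧ γ.map Prod.snd = ν ∧
    c = ∫ p, ‖p.1 - p.2‖ ∂γ }

/-- One inequality of the dual reformulation over the Wasserstein ball (Proposition 1):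
if a measurable selector `φ` realizes pointwise the minimum of `V` over the radius-`ξ`
uncertainty set, then the infimum of `∫ V dPhat` over probability measures `Phat` with
`W(P, Phat) ≤ ξ` is at most `∫ (⨅ shat ∈ U_ξ(s), V shat) dP(s)`. -/
theorem inf_over_wasserstein_ball_le {n : ℕ}
    (P : Measure (EuclideanSpace ℝ (Fin n))) [IsProbabilityMeasure P]
    (V : EuclideanSpace ℝ (Fin n) → ℝ)
    (hV_meas : Measurable V) (hV_bdd : ∃ C : ℝ, ∀ x, |V x| ≤ C)
    (ξ : ℝ) (hξ : 0 ≤ ξ)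
    (φ : EuclideanSpace ℝ (Fin n) → EuclideanSpace ℝ (Fin n))
    (hφ_meas : Measurable φ)
    (hφ_close : ∀ s, ‖φ s - s‖ ≤ ξ)
    (hφ_min : ∀ s, V (φ s) =
      ⨅ shat : {shat : EuclideanSpace ℝ (Fin n) // ‖shat - s‖ ≤ ξ}, V shat.1) :
    sInf { v : ℝ | ∃ Phat : Measure (EuclideanSpace ℝ (Fin n)),
        IsProbabilityMeasure Phat ∧ wassersteinDist P Phat ≤ ξ ∧
        v = ∫ x, V x ∂Phat } ≤
      ∫ s, (⨅ shat : {shat : EuclideanSpace ℝ (Fin n) // ‖shat - s‖ ≤ ξ}, V shat.1) ∂P := by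
  obtain ⟨C, hC⟩ := hV_bdd
  -- integrability of V under any probability measure
  have hVint : ∀ (Q : Measure (EuclideanSpace ℝ (Fin n))), IsProbabilityMeasure Q →
      Integrable V Q := by
    intro Q hQ
    refine ⟨hV_meas.aestronglyMeasurable, ?_⟩
    exact HasFiniteIntegral.of_bounded (C := C) (Filter.Eventually.of_forall fun x => by
      simpa [Real.norm_eq_abs] using hC x)
  -- the candidate measure
  set Phat := P.map φ with hPhat
  haveI : IsProbabilityMeasure Phat := Measure.isProbabilityMeasure_map hφ_meas.aemeasurable
  -- wasserstein distance bound via diagonal coupling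
  have hW : wassersteinDist P Phat ≤ ξ := by
    set γ := P.map (fun s => (s, φ s)) with hγ
    have hmeas : Measurable (fun s : EuclideanSpace ℝ (Fin n) => (s, φ s)) :=
      measurable_id.prodMk hφ_meas
    haveI : IsProbabilityMeasure γ := Measure.isProbabilityMeasure_map hmeas.aemeasurable
    have h1 : γ.map Prod.fst = P := by
      rw [hγ, Measure.map_map measurable_fst hmeas]
      have : (Prod.fst ∘ fun s : EuclideanSpace ℝ (Fin n) => (s, φ s)) = id := rfl
      rw [this, Measure.map_id]
    have h2 : γ.map Prod.snd = Phat := by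
      rw [hγ, Measure.map_map measurable_snd hmeas, hPhat]
      rfl
    have hc : ∫ p, ‖p.1 - p.2‖ ∂γ ≤ ξ := by
      rw [hγ, integral_map hmeas.aemeasurable (f := fun p : EuclideanSpace ℝ (Fin n) × EuclideanSpace ℝ (Fin n) => ‖p.1 - p.2‖)
        ((measurable_fst.sub measurable_snd).norm).aestronglyMeasurable]
      calc ∫ s, ‖s - φ s‖ ∂P ≤ ∫ _, ξ ∂P := by
            refine integral_mono ?_ (integrable_const ξ) ?_
            · refine ⟨((measurable_id.sub hφ_meas).norm).aestronglyMeasurable, ?_⟩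
              exact HasFiniteIntegral.of_bounded (C := ξ) (Filter.Eventually.of_forall fun s => by
                simpa [Real.norm_eq_abs, abs_of_nonneg (norm_nonneg _)] using
                  (norm_sub_rev s (φ s) ▸ hφ_close s))
            · intro s
              simpa [norm_sub_rev] using hφ_close s
        _ = ξ := by simp
    have hmem : (∫ p, ‖p.1 - p.2‖ ∂γ) ∈ { c : ℝ | ∃ γ' : Measure (EuclideanSpace ℝ (Fin n) × EuclideanSpace ℝ (Fin n)),
        IsProbabilityMeasure γ' ∧ γ'.map Prod.fst = P ∧ γ'.map Prod.snd = Phat ∧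
        c = ∫ p, ‖p.1 - p.2‖ ∂γ' } := ⟨γ, inferInstance, h1, h2, rfl⟩
    have hbdd : BddBelow { c : ℝ | ∃ γ' : Measure (EuclideanSpace ℝ (Fin n) × EuclideanSpace ℝ (Fin n)),
        IsProbabilityMeasure γ' ∧ γ'.map Prod.fst = P ∧ γ'.map Prod.snd = Phat ∧
        c = ∫ p, ‖p.1 - p.2‖ ∂γ' } := by
      refine ⟨0, ?_⟩
      rintro c ⟨γ', _, _, _, rfl⟩
      exact integral_nonneg fun p => norm_nonneg _
    exact le_trans (csInf_le hbdd hmem) hc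
  -- the value at Phat equals the RHS
  have hval : ∫ x, V x ∂Phat =
      ∫ s, (⨅ shat : {shat : EuclideanSpace ℝ (Fin n) // ‖shat - s‖ ≤ ξ}, V shat.1) ∂P := by
    rw [hPhat, integral_map hφ_meas.aemeasurable hV_meas.aestronglyMeasurable]
    exact integral_congr_ae (Filter.Eventually.of_forall fun s => hφ_min s)
  -- conclude
  have hmem : (∫ x, V x ∂Phat) ∈ { v : ℝ | ∃ Phat' : Measure (EuclideanSpace ℝ (Fin n)),
      IsProbabilityMeasure Phat' ∧ wassersteinDist P Phat' ≤ ξ ∧ v = ∫ x, V x ∂Phat' } :=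
    ⟨Phat, inferInstance, hW, rfl⟩
  have hbdd : BddBelow { v : ℝ | ∃ Phat' : Measure (EuclideanSpace ℝ (Fin n)),
      IsProbabilityMeasure Phat' ∧ wassersteinDist P Phat' ≤ ξ ∧ v = ∫ x, V x ∂Phat' } := by
    refine ⟨-C, ?_⟩
    rintro v ⟨Q, hQ, _, rfl⟩
    have : ∫ _, (-C : ℝ) ∂Q ≤ ∫ x, V x ∂Q := by
      refine integral_mono (integrable_const _) (hVint Q hQ) fun x => ?_
      linarith [abs_le.mp (hC x) |>.1]
    simpa using this
  exact hval ▸ csInf_le hbdd hmem
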